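/- If T is a weakly irreducible nonnegative tensor of order k and dimension n, then ρ(T) is the unique eigenvalue of T possessing a strictly positive eigenvector, and that positive eigenvector is unique up to positive scalar multiples. -/

import Mathlib

open Finset

/-- A `k`-uniform hypergraph on vertex type `V`. -/
structure UHypergraph (V : Type*) (k : ℕ) where
  edges : Finset (Finset V)
  uniform : ∀ e ∈ edges, e.card = k

namespace UHypergraph

variable {V : Type*} {k : ℕ}

/-- The degree of a vertex: the number of edges containing it. -/
def degree [DecidableEq V] (G : UHypergraph V k) (v : V) : ℕ :=
  (G.edges.filter fun e => v ∈ e).card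

/-- There is a walk from `a` to `b`. -/
def HasWalk (G : UHypergraph V k) (a b : V) : Prop :=
  ∃ (l : ℕ) (v : Fin (l + 1) → V) (e : Fin l → Finset V),
    v 0 = a ∧ v (Fin.last l) = b ∧
    ∀ i : Fin l, e i ∈ G.edges ∧ v i.castSucc ∈ e i ∧ v i.succ ∈ e i

/-- `G` is connected: every two vertices are joined by a walk. -/
def Connected (G : UHypergraph V k) : Prop := ∀ a b : V, G.HasWalk a b

/-- A cycle `v_0 e_1 v_1 ⋯ e_l v_0`: pairwise distinct vertices, pairwise
distinct edges, with `{v i, v (i+1)} ⊆ e i` (indices mod `len`). -/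
structure HCycle (G : UHypergraph V k) where
  len : ℕ
  two_le : 2 ≤ len
  vtx : Fin len → V
  edg : Fin len → Finset V
  vtx_inj : Function.Injective vtx
  edg_inj : Function.Injective edg
  edg_mem : ∀ i, edg i ∈ G.edges
  fst_mem : ∀ i, vtx i ∈ edg i
  snd_mem : ∀ i : Fin len, vtx ⟨((i : ℕ) + 1) % len, Nat.mod_lt _ (by omega)⟩ ∈ edg i

/-- `G` contains no cycle. -/
def Acyclic (G : UHypergraph V k) : Prop := IsEmpty (HCycle G)

/-- A hypertree is a connected acyclic hypergraph. -/
def IsHypertree (G : UHypergraph V k) : Prop := G.Connected ∧ G.Acyclic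

/-- `G` is unicyclic: connected with exactly one cycle (any two cycles have
the same vertex set and the same edge set). -/
def IsUnicyclic (G : UHypergraph V k) : Prop :=
  G.Connected ∧ Nonempty (HCycle G) ∧
    ∀ C C' : HCycle G,
      Set.range C.vtx = Set.range C'.vtx ∧ Set.range C.edg = Set.range C'.edg

/-- The girth: the minimum length of a cycle. -/
noncomputable def girth (G : UHypergraph V k) : ℕ := sInf {l | ∃ C : HCycle G, C.len = l}

/-- `G` is linear: any two distinct edges meet in at most one vertex. -/
def Linear [DecidableEq V] (G : UHypergraph V k) : Prop :=
  ∀ e ∈ G.edges, ∀ f ∈ G.edges, e ≠ f → (e ∩ f).card ≤ 1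

/-- Bicyclic: connected with cyclomatic number `m(k-1) - n + 1 = 2`. -/
def IsBicyclic [Fintype V] (G : UHypergraph V k) : Prop :=
  G.Connected ∧ G.edges.card * (k - 1) = Fintype.card V + 1

end UHypergraph

/-- Isomorphism of `k`-uniform hypergraphs. -/
def HIso {V W : Type*} [DecidableEq W] {k : ℕ} (G : UHypergraph V k) (H : UHypergraph W k) : Prop :=
  ∃ φ : V ≃ W, ∀ e : Finset V, e ∈ G.edges ↔ e.image (φ : V → W) ∈ H.edges

section Tensor

variable {V : Type*} {k : ℕ}

/-- Prepend `i` to a `(k-1)`-tuple, obtaining a `k`-tuple. -/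
def tupleCons (i : V) (g : Fin (k - 1) → V) : Fin k → V :=
  fun j => if h : (j : ℕ) = 0 then i else g ⟨(j : ℕ) - 1, by have := j.isLt; omega⟩

/-- `(T x^{k-1})_i = ∑_{i_2,…,i_k} t_{i i_2 … i_k} x_{i_2} ⋯ x_{i_k}`. -/
def tApply [Fintype V] {R : Type*} [CommSemiring R] (T : (Fin k → V) → R) (x : V → R) (i : V) : R :=
  ∑ g : Fin (k - 1) → V, T (tupleCons i g) * ∏ j, x (g j)

/-- `lam ∈ ℂ` is an eigenvalue of the real tensor `T`:
`T x^{k-1} = lam x^{[k-1]}` for some `x ≠ 0`. -/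
def IsEig [Fintype V] (T : (Fin k → V) → ℝ) (lam : ℂ) : Prop :=
  ∃ x : V → ℂ, x ≠ 0 ∧ ∀ i, tApply (fun f => ((T f : ℝ) : ℂ)) x i = lam * x i ^ (k - 1)

/-- The spectral radius of a tensor: the maximum modulus of its eigenvalues. -/
noncomputable def specRad [Fintype V] (T : (Fin k → V) → ℝ) : ℝ :=
  sSup {r : ℝ | ∃ lam : ℂ, IsEig T lam ∧ ‖lam‖ = r}

/-- The arc `i → j` of the digraph `G(T)` associated with a nonnegative tensor. -/
def arcRel (T : (Fin k → V) → ℝ) (i j : V) : Prop :=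
  ∃ g : Fin (k - 1) → V, 0 < T (tupleCons i g) ∧ ∃ l, g l = j

/-- `T` is weakly irreducible: the associated digraph is strongly connected. -/
def WeaklyIrreducible (T : (Fin k → V) → ℝ) : Prop :=
  ∀ a b : V, Relation.ReflTransGen (arcRel T) a b

/-- The adjacency tensor of a `k`-uniform hypergraph: entry `1/(k-1)!` on
tuples of distinct vertices forming an edge, `0` otherwise. -/
noncomputable def adjTensor [Fintype V] [DecidableEq V] (G : UHypergraph V k) : (Fin k → V) → ℝ :=
  fun f => if Function.Injective f ∧ Finset.image f Finset.univ ∈ G.edges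
    then ((Nat.factorial (k - 1) : ℝ))⁻¹ else 0

/-- The spectral radius of a hypergraph. -/
noncomputable def hSpecRad [Fintype V] [DecidableEq V] (G : UHypergraph V k) : ℝ :=
  specRad (adjTensor G)

/-- `x` is a Perron vector of `G`: a positive eigenvector for `ρ(G)`. -/
def IsPerron [Fintype V] [DecidableEq V] (G : UHypergraph V k) (x : V → ℝ) : Prop :=
  (∀ v, 0 < x v) ∧ ∀ i, tApply (adjTensor G) x i = hSpecRad G * x i ^ (k - 1)

end Tensor

section Shapes

variable {V : Type*} {k : ℕ}

/-- A hyperstar: all edges share a common vertex `c`, and pairwise meet exactly in `c`. -/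
def IsHyperstar [DecidableEq V] (G : UHypergraph V k) : Prop :=
  G.Connected ∧ ∃ c : V, (∀ e ∈ G.edges, c ∈ e) ∧
    ∀ e ∈ G.edges, ∀ f ∈ G.edges, e ≠ f → e ∩ f = {c}

/-- `H` is the `k`-th power of the simple graph (2-uniform hypergraph) `B`:
each edge of `B` is enlarged by `k-2` new vertices, all distinct. -/
def IsPowerOf [DecidableEq V] {W : Type*} (H : UHypergraph V k) (B : UHypergraph W 2) : Prop :=
  ∃ (ι : W ↪ V) (ν : ({e // e ∈ B.edges} × Fin (k - 2)) ↪ V),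
    (∀ w p, ι w ≠ ν p) ∧
    (∀ v : V, (∃ w, ι w = v) ∨ (∃ p, ν p = v)) ∧
    H.edges = B.edges.attach.image
      (fun e => e.1.map ι ∪ Finset.image (fun j : Fin (k - 2) => ν (e, j)) Finset.univ)

/-- `H` is a power hypergraph: the `k`-th power of some simple graph. -/
def IsPowerHG [DecidableEq V] (H : UHypergraph V k) : Prop :=
  ∃ (W : Type) (B : UHypergraph W 2), IsPowerOf H B

/-- The shape of `S_{m,g}^k`: a linear unicyclic hypergraph with `m` edges and
girth `g`, whose cycle has length `g`, all non-cycle edges being pendant edges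
at a common cycle vertex `u` (their other vertices having degree one). -/
def IsSmg [DecidableEq V] (g m : ℕ) (G : UHypergraph V k) : Prop :=
  G.IsUnicyclic ∧ G.Linear ∧ G.edges.card = m ∧ G.girth = g ∧
    ∃ (C : UHypergraph.HCycle G) (u : V), C.len = g ∧ (∃ i, C.vtx i = u) ∧
      ∀ f ∈ G.edges, (∃ i, C.edg i = f) ∨
        (u ∈ f ∧ ∀ w ∈ f, w ≠ u → G.degree w = 1)

/-- The shape of `B_m^P`: the `k`-th power of `K_4` minus an edge (two triangles
on `a,b,c` and `a,b,d` sharing base `a b`) with a hyperstar of `m - 5` edges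
attached at the degree-3 vertex `a`. -/
def IsBmP [DecidableEq V] (m : ℕ) (G : UHypergraph V k) : Prop :=
  G.Connected ∧ G.edges.card = m ∧
    ∃ (a b c d : V) (f : Fin 5 → Finset V),
      (a ≠ b ∧ a ≠ c ∧ a ≠ d ∧ b ≠ c ∧ b ≠ d ∧ c ≠ d) ∧
      Function.Injective f ∧ (∀ i, f i ∈ G.edges) ∧
      f 0 ∩ {a, b, c, d} = {a, b} ∧
      f 1 ∩ {a, b, c, d} = {a, c} ∧
      f 2 ∩ {a, b, c, d} = {b, c} ∧
      f 3 ∩ {a, b, c, d} = {a, d} ∧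
      f 4 ∩ {a, b, c, d} = {b, d} ∧
      (∀ i, ∀ w ∈ f i, w ∉ ({a, b, c, d} : Finset V) → G.degree w = 1) ∧
      (∀ e ∈ G.edges, (∀ i, f i ≠ e) → a ∈ e ∧ ∀ w ∈ e, w ≠ a → G.degree w = 1)

/-- The core `G_5`: an edge `e ⊇ {v1,v2,v3}` and three further edges joining
`v1, v2, v3` to a common vertex `w` outside `e`; all vertices of these four
edges other than `w, v1, v2, v3` have degree one. -/
def G5Core [DecidableEq V] (G : UHypergraph V k) (w v1 v2 v3 : V) (e g1 g2 g3 : Finset V) : Prop :=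
  (w ≠ v1 ∧ w ≠ v2 ∧ w ≠ v3 ∧ v1 ≠ v2 ∧ v1 ≠ v3 ∧ v2 ≠ v3) ∧
  (e ∈ G.edges ∧ g1 ∈ G.edges ∧ g2 ∈ G.edges ∧ g3 ∈ G.edges) ∧
  (e ≠ g1 ∧ e ≠ g2 ∧ e ≠ g3 ∧ g1 ≠ g2 ∧ g1 ≠ g3 ∧ g2 ≠ g3) ∧
  e ∩ {w, v1, v2, v3} = {v1, v2, v3} ∧
  g1 ∩ {w, v1, v2, v3} = {w, v1} ∧
  g2 ∩ {w, v1, v2, v3} = {w, v2} ∧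
  g3 ∩ {w, v1, v2, v3} = {w, v3} ∧
  (∀ f ∈ ({e, g1, g2, g3} : Finset (Finset V)), ∀ x ∈ f, x ∉ ({w, v1, v2, v3} : Finset V) →
    G.degree x = 1)

/-- `B_m^L(1)`: `G_5` with a hyperstar of `m-4` edges attached at the degree-3 vertex `w`. -/
def IsBmL1 [DecidableEq V] (m : ℕ) (G : UHypergraph V k) : Prop :=
  G.Connected ∧ G.edges.card = m ∧
    ∃ (w v1 v2 v3 : V) (e g1 g2 g3 : Finset V), G5Core G w v1 v2 v3 e g1 g2 g3 ∧
      ∀ f ∈ G.edges, f ∉ ({e, g1, g2, g3} : Finset (Finset V)) →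
        w ∈ f ∧ ∀ x ∈ f, x ≠ w → G.degree x = 1

/-- `B_m^L(2)`: `G_5` with a hyperstar of `m-4` edges attached at a degree-2 vertex `v1`. -/
def IsBmL2 [DecidableEq V] (m : ℕ) (G : UHypergraph V k) : Prop :=
  G.Connected ∧ G.edges.card = m ∧
    ∃ (w v1 v2 v3 : V) (e g1 g2 g3 : Finset V), G5Core G w v1 v2 v3 e g1 g2 g3 ∧
      ∀ f ∈ G.edges, f ∉ ({e, g1, g2, g3} : Finset (Finset V)) →
        v1 ∈ f ∧ ∀ x ∈ f, x ≠ v1 → G.degree x = 1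

/-- The support (vertex set) of a set of edges. -/
def esupp {V : Type*} [DecidableEq V] (E : Finset (Finset V)) : Finset V := E.sup id

end Shapes

section Aux

open Finset

variable {k n : ℕ}

lemma tApply_nonneg (T : (Fin k → Fin n) → ℝ) (hT : ∀ f, 0 ≤ T f)
    (x : Fin n → ℝ) (hx : ∀ i, 0 ≤ x i) (i : Fin n) : 0 ≤ tApply T x i := by
  refine Finset.sum_nonneg fun g _ => mul_nonneg (hT _) (Finset.prod_nonneg fun j _ => hx _)

lemma tApply_mono (T : (Fin k → Fin n) → ℝ) (hT : ∀ f, 0 ≤ T f)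
    {x y : Fin n → ℝ} (hx : ∀ i, 0 ≤ x i) (hxy : ∀ i, x i ≤ y i) (i : Fin n) :
    tApply T x i ≤ tApply T y i := by
  refine Finset.sum_le_sum fun g _ => ?_
  exact mul_le_mul_of_nonneg_left
    (Finset.prod_le_prod (fun j _ => hx _) (fun j _ => hxy _)) (hT _)

lemma tApply_smul (T : (Fin k → Fin n) → ℝ) (c : ℝ) (x : Fin n → ℝ) (i : Fin n) :
    tApply T (c • x) i = c ^ (k - 1) * tApply T x i := by
  unfold tApply
  rw [Finset.mul_sum]
  refine Finset.sum_congr rfl fun g _ => ?_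
  simp only [Pi.smul_apply, smul_eq_mul]
  rw [Finset.prod_mul_distrib, Finset.prod_const]
  simp [Finset.card_univ]
  ring

lemma tApply_term_le (T : (Fin k → Fin n) → ℝ) (hT : ∀ f, 0 ≤ T f)
    (x : Fin n → ℝ) (hx : ∀ i, 0 ≤ x i) (i : Fin n) (g : Fin (k-1) → Fin n) :
    T (tupleCons i g) * ∏ j, x (g j) ≤ tApply T x i := by
  refine Finset.single_le_sum (f := fun g => T (tupleCons i g) * ∏ j, x (g j))
    (fun g _ => mul_nonneg (hT _) (Finset.prod_nonneg fun j _ => hx _)) (Finset.mem_univ g)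

lemma tApply_continuous (T : (Fin k → Fin n) → ℝ) (i : Fin n) :
    Continuous fun x : Fin n → ℝ => tApply T x i := by
  unfold tApply
  refine continuous_finset_sum _ fun g _ => ?_
  exact continuous_const.mul (continuous_finset_prod _ fun j _ => continuous_apply _)

end Aux
section Aux2
open Finset
variable {k n : ℕ}

lemma tApply_cast (T : (Fin k → Fin n) → ℝ) (x : Fin n → ℝ) (i : Fin n) :
    tApply (fun f => ((T f : ℝ) : ℂ)) (fun j => ((x j : ℝ) : ℂ)) i
      = ((tApply T x i : ℝ) : ℂ) := by
  unfold tApply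
  push_cast
  rfl

/-- Sub-invariance: if `x > 0` is an eigenvector for `lam` and `z ≥ 0`, `z ≠ 0`
satisfies `T z ≥ μ z^{[k-1]}`, then `μ ≤ lam`. -/
lemma subinvariant_le (hk : 2 ≤ k) (hn : 1 ≤ n) (T : (Fin k → Fin n) → ℝ)
    (hT : ∀ f, 0 ≤ T f) {x : Fin n → ℝ} {lam : ℝ}
    (hx : ∀ i, 0 < x i) (heig : ∀ i, tApply T x i = lam * x i ^ (k - 1))
    {z : Fin n → ℝ} {μ : ℝ} (hz : ∀ i, 0 ≤ z i) (hz0 : z ≠ 0)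
    (hsub : ∀ i, μ * z i ^ (k - 1) ≤ tApply T z i) : μ ≤ lam := by
  haveI : Nonempty (Fin n) := ⟨⟨0, hn⟩⟩
  have hne : (Finset.univ : Finset (Fin n)).Nonempty := Finset.univ_nonempty
  obtain ⟨i₁, -, hi₁⟩ := Finset.exists_mem_eq_sup' hne (fun i => z i / x i)
  set t := Finset.univ.sup' hne (fun i => z i / x i) with ht
  have hzle : ∀ i, z i ≤ t * x i := fun i => by
    have := Finset.le_sup' (fun i => z i / x i) (Finset.mem_univ i)
    rw [← ht] at this
    calc z i = (z i / x i) * x i := (div_mul_cancel₀ _ (hx i).ne').symm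
    _ ≤ t * x i := by nlinarith [hx i]
  have hzi₁ : z i₁ = t * x i₁ := by
    rw [hi₁, div_mul_cancel₀ _ (hx i₁).ne']
  have htpos : 0 < t := by
    obtain ⟨j, hj⟩ : ∃ j, z j ≠ 0 := by
      by_contra h; push_neg at h; exact hz0 (funext h)
    have hzj : 0 < z j := lt_of_le_of_ne (hz j) (Ne.symm hj)
    have := hzle j
    nlinarith [hx j]
  have key : μ * z i₁ ^ (k - 1) ≤ lam * z i₁ ^ (k - 1) := by
    calc μ * z i₁ ^ (k - 1) ≤ tApply T z i₁ := hsub i₁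
    _ ≤ tApply T (t • x) i₁ := tApply_mono T hT hz (fun i => hzle i) i₁
    _ = t ^ (k-1) * (lam * x i₁ ^ (k-1)) := by rw [tApply_smul, heig]
    _ = lam * (t * x i₁) ^ (k - 1) := by rw [mul_pow]; ring
    _ = lam * z i₁ ^ (k - 1) := by rw [hzi₁]
  have hzpow : 0 < z i₁ ^ (k - 1) := by
    have h2 : 0 < z i₁ := by rw [hzi₁]; exact mul_pos htpos (hx i₁)
    exact pow_pos h2 _
  exact le_of_mul_le_mul_right (by linarith [key]) hzpow

/-- Super-invariance: if `x > 0` is an eigenvector for `lam` and `z > 0`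
satisfies `T z ≤ μ z^{[k-1]}`, then `lam ≤ μ`. -/
lemma le_superinvariant (hk : 2 ≤ k) (hn : 1 ≤ n) (T : (Fin k → Fin n) → ℝ)
    (hT : ∀ f, 0 ≤ T f) {x : Fin n → ℝ} {lam : ℝ}
    (hx : ∀ i, 0 < x i) (heig : ∀ i, tApply T x i = lam * x i ^ (k - 1))
    {z : Fin n → ℝ} {μ : ℝ} (hz : ∀ i, 0 < z i)
    (hsub : ∀ i, tApply T z i ≤ μ * z i ^ (k - 1)) : lam ≤ μ := by
  haveI : Nonempty (Fin n) := ⟨⟨0, hn⟩⟩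
  have hne : (Finset.univ : Finset (Fin n)).Nonempty := Finset.univ_nonempty
  obtain ⟨i₁, -, hi₁⟩ := Finset.exists_mem_eq_sup' hne (fun i => x i / z i)
  set t := Finset.univ.sup' hne (fun i => x i / z i) with ht
  have hxle : ∀ i, x i ≤ t * z i := fun i => by
    have := Finset.le_sup' (fun i => x i / z i) (Finset.mem_univ i)
    rw [← ht] at this
    calc x i = (x i / z i) * z i := (div_mul_cancel₀ _ (hz i).ne').symm
    _ ≤ t * z i := by nlinarith [hz i]
  have hxi₁ : x i₁ = t * z i₁ := by rw [hi₁, div_mul_cancel₀ _ (hz i₁).ne']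
  have htpos : 0 < t := by
    have := hxle i₁
    nlinarith [hx i₁, hz i₁]
  have key : lam * x i₁ ^ (k - 1) ≤ μ * x i₁ ^ (k - 1) := by
    calc lam * x i₁ ^ (k - 1) = tApply T x i₁ := (heig i₁).symm
    _ ≤ tApply T (t • z) i₁ :=
        tApply_mono T hT (fun i => le_of_lt (hx i)) (fun i => hxle i) i₁
    _ = t ^ (k-1) * tApply T z i₁ := tApply_smul T t z i₁
    _ ≤ t ^ (k-1) * (μ * z i₁ ^ (k-1)) := by
        have := hsub i₁
        have h1 : (0:ℝ) ≤ t ^ (k-1) := by positivity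
        nlinarith
    _ = μ * (t * z i₁) ^ (k - 1) := by rw [mul_pow]; ring
    _ = μ * x i₁ ^ (k - 1) := by rw [hxi₁]
  have hxpow : 0 < x i₁ ^ (k - 1) := pow_pos (hx i₁) _
  exact le_of_mul_le_mul_right (by linarith [key]) hxpow

end Aux2
section Aux3
open Finset
variable {k n : ℕ}

/-- `m`-step iteration of a relation. -/
def IterRel {α : Type*} (r : α → α → Prop) : ℕ → α → α → Prop
  | 0, a, b => a = b
  | (m+1), a, b => ∃ c, IterRel r m a c ∧ r c b

lemma reflTransGen_iterRel {α : Type*} {r : α → α → Prop} {a b : α}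
    (h : Relation.ReflTransGen r a b) : ∃ m, IterRel r m a b := by
  induction h with
  | refl => exact ⟨0, rfl⟩
  | tail _ hstep ih => obtain ⟨m, hm⟩ := ih; exact ⟨m + 1, _, hm, hstep⟩

/-- The iterated growth bound. -/
noncomputable def Kfun (q : ℝ) (km : ℕ) : ℕ → ℝ
  | 0 => 1
  | (m+1) => q * Kfun q km m ^ km

lemma Kfun_one_le {q : ℝ} {km : ℕ} (hq : 1 ≤ q) : ∀ m, 1 ≤ Kfun q km m
  | 0 => le_refl 1
  | (m+1) => by
      have h := Kfun_one_le (km := km) hq m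
      have : (1:ℝ) ≤ Kfun q km m ^ km := one_le_pow₀ h
      calc (1:ℝ) = 1 * 1 := by ring
      _ ≤ q * Kfun q km m ^ km := by nlinarith

lemma Kfun_mono {q : ℝ} {km : ℕ} (hq : 1 ≤ q) (hkm : 1 ≤ km) :
    Monotone (Kfun q km) := by
  apply monotone_nat_of_le_succ
  intro m
  have h := Kfun_one_le (km := km) hq m
  have h2 : Kfun q km m ≤ Kfun q km m ^ km := le_self_pow₀ (by linarith) (by omega)
  calc Kfun q km m ≤ 1 * Kfun q km m ^ km := by linarith
  _ ≤ q * Kfun q km m ^ km := by nlinarith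
end Aux3
section Aux4
open Finset
variable {k n : ℕ}

lemma arc_step_bound (hk : 2 ≤ k) (T : (Fin k → Fin n) → ℝ) (hT : ∀ f, 0 ≤ T f)
    {τ γ : ℝ} (hτ : 0 < τ) (hτle : ∀ f, 0 < T f → τ ≤ T f)
    {z : Fin n → ℝ} (hz1 : ∀ i, 1 ≤ z i)
    (hb : ∀ i, tApply T z i ≤ γ * z i ^ (k - 1))
    {i j : Fin n} (harc : arcRel T i j) : z j ≤ (γ / τ) * z i ^ (k - 1) := by
  obtain ⟨g, hpos, l, hl⟩ := harc
  have hz0 : ∀ i, (0:ℝ) ≤ z i := fun i => le_trans zero_le_one (hz1 i)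
  have hprod : z j ≤ ∏ j', z (g j') := by
    rw [← hl]
    calc z (g l) = ∏ j', if j' = l then z (g l) else 1 := by
          rw [Finset.prod_ite_eq' Finset.univ l (fun _ => z (g l))]
          simp
    _ ≤ ∏ j', z (g j') := by
        refine Finset.prod_le_prod (fun j' _ => ?_) (fun j' _ => ?_)
        · split <;> [linarith [hz1 (g l)]; norm_num]
        · by_cases h : j' = l
          · subst h; simp
          · simp only [h, if_false]; exact hz1 (g j')
  have h1 : τ * z j ≤ T (tupleCons i g) * ∏ j', z (g j') := by
    have := hτle _ hpos
    nlinarith [hz0 j, Finset.prod_nonneg (fun j' (_ : j' ∈ Finset.univ) => hz0 (g j'))]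
  have h2 : τ * z j ≤ γ * z i ^ (k - 1) :=
    le_trans h1 (le_trans (tApply_term_le T hT z hz0 i g) (hb i))
  rw [div_mul_eq_mul_div, le_div_iff₀ hτ]
  nlinarith

lemma chain_bound (hk : 2 ≤ k) (T : (Fin k → Fin n) → ℝ) (hT : ∀ f, 0 ≤ T f)
    {τ γ : ℝ} (hτ : 0 < τ) (hτle : ∀ f, 0 < T f → τ ≤ T f) (hγ : τ ≤ γ)
    {z : Fin n → ℝ} (hz1 : ∀ i, 1 ≤ z i)
    (hb : ∀ i, tApply T z i ≤ γ * z i ^ (k - 1)) :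
    ∀ m (a b : Fin n), z a = 1 → IterRel (arcRel T) m a b → z b ≤ Kfun (γ/τ) (k-1) m := by
  intro m
  induction m with
  | zero => intro a b ha h; rw [show b = a from h.symm, ha]; exact le_refl _
  | succ m ih =>
    intro a b ha h
    obtain ⟨c, hmc, hcb⟩ := h
    have hc := ih a c ha hmc
    have hstep := arc_step_bound hk T hT hτ hτle hz1 hb hcb
    have hq : (1:ℝ) ≤ γ / τ := (one_le_div hτ).mpr hγ
    have hKc : (1:ℝ) ≤ Kfun (γ/τ) (k-1) m := Kfun_one_le hq m
    calc z b ≤ (γ / τ) * z c ^ (k - 1) := hstep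
    _ ≤ (γ / τ) * Kfun (γ/τ) (k-1) m ^ (k-1) := by
        have : z c ^ (k-1) ≤ Kfun (γ/τ) (k-1) m ^ (k-1) :=
          pow_le_pow_left₀ (le_trans zero_le_one (hz1 c)) hc _
        nlinarith
    _ = Kfun (γ/τ) (k-1) (m+1) := rfl

lemma comparability (hk : 2 ≤ k) (hn : 1 ≤ n) (T : (Fin k → Fin n) → ℝ)
    (hT : ∀ f, 0 ≤ T f) (hirr : WeaklyIrreducible T)
    {τ γ : ℝ} (hτ : 0 < τ) (hτle : ∀ f, 0 < T f → τ ≤ T f) (hγ : τ ≤ γ) :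
    ∃ C : ℝ, 1 ≤ C ∧ ∀ x : Fin n → ℝ, (∀ i, 0 < x i) →
      (∀ i, tApply T x i ≤ γ * x i ^ (k - 1)) → ∀ i j, x j ≤ C * x i := by
  haveI : Nonempty (Fin n) := ⟨⟨0, hn⟩⟩
  have hq : (1:ℝ) ≤ γ / τ := (one_le_div hτ).mpr hγ
  set M : ℕ := Finset.univ.sup
    (fun pq : Fin n × Fin n => (reflTransGen_iterRel (hirr pq.1 pq.2)).choose) with hM
  refine ⟨Kfun (γ/τ) (k-1) M, Kfun_one_le hq M, ?_⟩
  intro x hx hb i j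
  have hne : (Finset.univ : Finset (Fin n)).Nonempty := Finset.univ_nonempty
  obtain ⟨a, -, hax⟩ := Finset.exists_mem_eq_inf' hne x
  have hamin : ∀ i, x a ≤ x i := fun i => hax ▸ Finset.inf'_le x (Finset.mem_univ i)
  set z : Fin n → ℝ := (x a)⁻¹ • x with hzdef
  have hxa : 0 < x a := hx a
  have hz1 : ∀ i, 1 ≤ z i := fun i => by
    simp only [hzdef, Pi.smul_apply, smul_eq_mul]
    rw [← div_eq_inv_mul, le_div_iff₀ hxa]
    simpa using hamin i
  have hzb : ∀ i, tApply T z i ≤ γ * z i ^ (k - 1) := fun i => by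
    rw [hzdef, tApply_smul]
    simp only [Pi.smul_apply, smul_eq_mul, mul_pow]
    have hpow : (0:ℝ) < (x a)⁻¹ ^ (k-1) := by positivity
    calc (x a)⁻¹ ^ (k-1) * tApply T x i ≤ (x a)⁻¹ ^ (k-1) * (γ * x i ^ (k-1)) := by
          nlinarith [hb i]
    _ = γ * ((x a)⁻¹ ^ (k-1) * x i ^ (k-1)) := by ring
  have hza : z a = 1 := by
    simp only [hzdef, Pi.smul_apply, smul_eq_mul]
    field_simp
  have hiter := (reflTransGen_iterRel (hirr a j)).choose_spec
  have hmle : (reflTransGen_iterRel (hirr a j)).choose ≤ M :=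
    hM ▸ Finset.le_sup (f := fun pq : Fin n × Fin n =>
      (reflTransGen_iterRel (hirr pq.1 pq.2)).choose) (Finset.mem_univ (a, j))
  have hzj : z j ≤ Kfun (γ/τ) (k-1) M :=
    le_trans (chain_bound hk T hT hτ hτle hγ hz1 hzb _ a j hza hiter)
      (Kfun_mono hq (by omega) hmle)
  have : x j ≤ Kfun (γ/τ) (k-1) M * x a := by
    have := hzj
    simp only [hzdef, Pi.smul_apply, smul_eq_mul] at this
    rw [← div_eq_inv_mul, div_le_iff₀ hxa] at this
    linarith
  have hK0 : (0:ℝ) ≤ Kfun (γ/τ) (k-1) M := le_trans zero_le_one (Kfun_one_le hq M)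
  nlinarith [hamin i]
end Aux4
section Aux5a
open Finset

lemma continuousOn_finset_sup' {α ι : Type*} [TopologicalSpace α]
    (s : Finset ι) (hs : s.Nonempty) (f : ι → α → ℝ) {t : Set α}
    (hf : ∀ i ∈ s, ContinuousOn (f i) t) :
    ContinuousOn (fun x => s.sup' hs (fun i => f i x)) t := by
  induction hs using Finset.Nonempty.cons_induction with
  | singleton a => simpa using hf a (by simp)
  | cons a s ha hs ih =>
    have h1 : ContinuousOn (f a) t := hf a (by simp)
    have h2 := ih (fun i hi => hf i (by simp [hi]))
    have : (fun x => (Finset.cons a s ha).sup' (by simp) (fun i => f i x))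
        = fun x => max (f a x) (s.sup' hs (fun i => f i x)) := by
      funext x
      rw [Finset.sup'_cons]
    rw [this]
    exact (ContinuousOn.sup h1 h2)
end Aux5a
section Aux5
open Finset
variable {k n : ℕ}

set_option maxHeartbeats 2000000 in
lemma main_exists (hk : 2 ≤ k) (hn : 1 ≤ n) (T : (Fin k → Fin n) → ℝ)
    (hT : ∀ f, 0 ≤ T f) (hirr : WeaklyIrreducible T)
    (hrow : ∀ i, ∃ g, 0 < T (tupleCons i g)) :
    ∃ (x : Fin n → ℝ) (μ : ℝ), 0 ≤ μ ∧ (∀ i, 0 < x i) ∧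
      ∀ i, tApply T x i = μ * x i ^ (k - 1) := by
  classical
  haveI : Nonempty (Fin n) := ⟨⟨0, hn⟩⟩
  have hne : (Finset.univ : Finset (Fin n)).Nonempty := Finset.univ_nonempty
  -- the minimal positive entry τ
  set s : Finset (Fin k → Fin n) := Finset.univ.filter (fun f => 0 < T f) with hs
  have hsne : s.Nonempty := by
    obtain ⟨g, hg⟩ := hrow ⟨0, hn⟩
    exact ⟨tupleCons ⟨0, hn⟩ g, by simp [hs, hg]⟩
  set τ : ℝ := s.inf' hsne T with hτdef
  have hτ : 0 < τ := by
    obtain ⟨f₀, hf₀, hf₀'⟩ := Finset.exists_mem_eq_inf' hsne T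
    rw [hτdef, hf₀']
    simpa [hs] using (Finset.mem_filter.mp hf₀).2
  have hτle : ∀ f, 0 < T f → τ ≤ T f := fun f hf =>
    Finset.inf'_le T (by simp [hs, hf])
  -- the ratio functions and g
  set ratio : (Fin n → ℝ) → Fin n → ℝ :=
    fun x i => tApply T x i / x i ^ (k - 1) with hratiodef
  set gfun : (Fin n → ℝ) → ℝ := fun x => Finset.univ.sup' hne (ratio x) with hgdef
  have hratio_le : ∀ x i, ratio x i ≤ gfun x := fun x i =>
    Finset.le_sup' (ratio x) (Finset.mem_univ i)
  have hratio_eq : ∀ (x : Fin n → ℝ), (∀ i, 0 < x i) → ∀ i,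
      tApply T x i = ratio x i * x i ^ (k - 1) := by
    intro x hx i
    rw [hratiodef]
    exact (div_mul_cancel₀ _ (ne_of_gt (pow_pos (hx i) _))).symm
  have hbound : ∀ (x : Fin n → ℝ), (∀ i, 0 < x i) → ∀ i,
      tApply T x i ≤ gfun x * x i ^ (k - 1) := by
    intro x hx i
    rw [hratio_eq x hx i]
    have := hratio_le x i
    nlinarith [pow_pos (hx i) (k-1)]
  have hscale : ∀ (c : ℝ), 0 < c → ∀ x : Fin n → ℝ, (∀ i, 0 < x i) →
      gfun (c • x) = gfun x := by
    intro c hc x hx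
    rw [hgdef]
    refine Finset.sup'_congr hne rfl (fun i _ => ?_)
    rw [hratiodef]
    simp only [tApply_smul, Pi.smul_apply, smul_eq_mul, mul_pow]
    rw [mul_div_mul_left]
    positivity
  -- γ
  set one : Fin n → ℝ := fun _ => 1 with honedef
  have hone_pos : ∀ i, (0:ℝ) < one i := fun i => one_pos
  set γ : ℝ := gfun one with hγdef
  have hτγ : τ ≤ γ := by
    obtain ⟨g₀, hg₀⟩ := hrow ⟨0, hn⟩
    have h1 : τ ≤ T (tupleCons ⟨0, hn⟩ g₀) := hτle _ hg₀
    have h2 : T (tupleCons ⟨0, hn⟩ g₀) * ∏ j, one (g₀ j) ≤ tApply T one ⟨0, hn⟩ :=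
      tApply_term_le T hT one (fun i => le_of_lt (hone_pos i)) _ g₀
    have h3 : ratio one ⟨0, hn⟩ ≤ γ := hratio_le one ⟨0, hn⟩
    rw [hratiodef] at h3
    simp only [honedef, one_pow, div_one, Finset.prod_const_one, mul_one] at h2 h3
    linarith
  obtain ⟨C, hC1, hC⟩ := comparability hk hn T hT hirr hτ hτle hτγ
  set ρ : ℝ := C⁻¹ with hρdef
  have hρ0 : 0 < ρ := by rw [hρdef]; positivity
  have hρ1 : ρ ≤ 1 := by
    rw [hρdef]
    exact inv_le_one_of_one_le₀ hC1
  -- the compact cube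
  set Q : Set (Fin n → ℝ) := Set.pi Set.univ (fun _ => Set.Icc ρ 1) with hQdef
  have hQc : IsCompact Q := isCompact_univ_pi (fun _ => isCompact_Icc)
  have hQmem : ∀ x : Fin n → ℝ, x ∈ Q ↔ ∀ i, ρ ≤ x i ∧ x i ≤ 1 := by
    intro x
    simp only [hQdef, Set.mem_univ_pi, Set.mem_Icc]
  have honeQ : one ∈ Q := (hQmem one).mpr (fun i => ⟨hρ1, le_refl 1⟩)
  have hQpos : ∀ x ∈ Q, ∀ i, 0 < x i := fun x hx i =>
    lt_of_lt_of_le hρ0 ((hQmem x).mp hx i).1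
  have hcont : ContinuousOn gfun Q := by
    rw [hgdef]
    refine continuousOn_finset_sup' Finset.univ hne (fun i x => ratio x i) (fun i _ => ?_)
    rw [hratiodef]
    refine ContinuousOn.div ((tApply_continuous T i).continuousOn) ?_ ?_
    · exact (continuous_pow (k-1)).comp (continuous_apply i) |>.continuousOn
    · intro x hx
      exact ne_of_gt (pow_pos (hQpos x hx i) _)
  obtain ⟨xm, hxmQ, hxmmin⟩ := hQc.exists_isMinOn ⟨one, honeQ⟩ hcont
  have hmin : ∀ y ∈ Q, gfun xm ≤ gfun y := fun y hy => isMinOn_iff.mp hxmmin y hy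
  set μ : ℝ := gfun xm with hμdef
  have hxmpos : ∀ i, 0 < xm i := hQpos xm hxmQ
  have hμγ : μ ≤ γ := hmin one honeQ
  have hμpos : 0 < μ := by
    obtain ⟨g₀, hg₀⟩ := hrow ⟨0, hn⟩
    have h2 : T (tupleCons ⟨0, hn⟩ g₀) * ∏ j, xm (g₀ j) ≤ tApply T xm ⟨0, hn⟩ :=
      tApply_term_le T hT xm (fun i => le_of_lt (hxmpos i)) _ g₀
    have h4 : 0 < tApply T xm ⟨0, hn⟩ := by
      have : 0 < T (tupleCons ⟨0, hn⟩ g₀) * ∏ j, xm (g₀ j) :=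
        mul_pos hg₀ (Finset.prod_pos (fun j _ => hxmpos (g₀ j)))
      linarith
    have h5 : 0 < ratio xm ⟨0, hn⟩ := by
      rw [hratiodef]
      exact div_pos h4 (pow_pos (hxmpos ⟨0, hn⟩) _)
    exact lt_of_lt_of_le h5 (hratio_le xm ⟨0, hn⟩)
  -- global minimality of μ
  have hglob : ∀ y : Fin n → ℝ, (∀ i, 0 < y i) → μ ≤ gfun y := by
    intro y hy
    by_contra hlt
    push_neg at hlt
    obtain ⟨b, -, hb⟩ := Finset.exists_mem_eq_sup' hne y
    have hyb : 0 < y b := hy b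
    set c : ℝ := (y b)⁻¹ with hcdef
    have hc : 0 < c := inv_pos.mpr hyb
    set yh : Fin n → ℝ := c • y with hyhdef
    have hyhpos : ∀ i, 0 < yh i := fun i => by
      simp only [hyhdef, Pi.smul_apply, smul_eq_mul]
      exact mul_pos hc (hy i)
    have hyhb : yh b = 1 := by
      simp only [hyhdef, Pi.smul_apply, smul_eq_mul, hcdef]
      exact inv_mul_cancel₀ (ne_of_gt hyb)
    have hyhle : ∀ i, yh i ≤ 1 := fun i => by
      simp only [hyhdef, Pi.smul_apply, smul_eq_mul, hcdef]
      rw [inv_mul_le_iff₀ hyb, mul_one]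
      exact hb ▸ Finset.le_sup' y (Finset.mem_univ i)
    have hgyh : gfun yh = gfun y := hscale c hc y hy
    have hbnd : ∀ i, tApply T yh i ≤ γ * yh i ^ (k - 1) := by
      intro i
      have h1 := hbound yh hyhpos i
      have h2 : gfun yh ≤ γ := by rw [hgyh]; linarith
      nlinarith [pow_pos (hyhpos i) (k-1)]
    have hcomp := hC yh hyhpos hbnd
    have hyhQ : yh ∈ Q := by
      refine (hQmem yh).mpr (fun i => ⟨?_, hyhle i⟩)
      have := hcomp i b
      rw [hyhb] at this
      have hCpos : (0:ℝ) < C := lt_of_lt_of_le zero_lt_one hC1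
      rw [hρdef, inv_eq_one_div, div_le_iff₀ hCpos]
      nlinarith
    have := hmin yh hyhQ
    rw [hgyh] at this
    exact absurd (lt_of_le_of_lt this hlt) (lt_irrefl _)
  -- cardinality descent
  set Iset : (Fin n → ℝ) → Finset (Fin n) :=
    fun x => Finset.univ.filter (fun i => tApply T x i = μ * x i ^ (k - 1)) with hIdef
  have hImemG : ∀ (x : Fin n → ℝ) (i : Fin n),
      i ∈ Iset x ↔ tApply T x i = μ * x i ^ (k - 1) := by
    intro x i
    simp [hIdef]
  have hIset_ne : ∀ x : Fin n → ℝ, (∀ i, 0 < x i) → gfun x = μ → (Iset x).Nonempty := by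
    intro x hx hgx
    obtain ⟨i, -, hi⟩ := Finset.exists_mem_eq_sup' hne (ratio x)
    have hri : ratio x i = μ := by rw [← hi]; exact hgx
    refine ⟨i, (hImemG x i).mpr ?_⟩
    rw [hratio_eq x hx i, hri]
  have hA : ∃ m, ∃ x : Fin n → ℝ, (∀ i, 0 < x i) ∧ gfun x = μ ∧ (Iset x).card = m :=
    ⟨(Iset xm).card, xm, hxmpos, rfl, rfl⟩
  set A : Set ℕ := {m | ∃ x : Fin n → ℝ, (∀ i, 0 < x i) ∧ gfun x = μ ∧ (Iset x).card = m}
    with hAdef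
  have hAne : A.Nonempty := hA
  obtain ⟨x₀, hx₀pos, hgx₀, hcard₀⟩ := Nat.sInf_mem hAne
  -- basic facts about x₀
  have F1 : ∀ i, tApply T x₀ i ≤ μ * x₀ i ^ (k - 1) := by
    intro i
    rw [← hgx₀]
    exact hbound x₀ hx₀pos i
  have hImem : ∀ i, i ∈ Iset x₀ ↔ tApply T x₀ i = μ * x₀ i ^ (k - 1) := hImemG x₀
  -- claim : Iset x₀ = univ
  by_cases hIuniv : Iset x₀ = Finset.univ
  · refine ⟨x₀, μ, le_of_lt hμpos, hx₀pos, fun i => ?_⟩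
    exact (hImem i).mp (hIuniv ▸ Finset.mem_univ i)
  exfalso
  obtain ⟨j₀, hj₀⟩ : ∃ j₀, j₀ ∉ Iset x₀ := by
    by_contra h
    push_neg at h
    exact hIuniv (Finset.eq_univ_iff_forall.mpr h)
  -- find an exit arc from Iset x₀
  have hexit : ∃ i' ∈ Iset x₀, ∃ g, 0 < T (tupleCons i' g) ∧ ∃ l, g l ∉ Iset x₀ := by
    by_contra hcl
    push_neg at hcl
    obtain ⟨i₁, hi₁⟩ := hIset_ne x₀ hx₀pos hgx₀
    have hstay : ∀ b, Relation.ReflTransGen (arcRel T) i₁ b → b ∈ Iset x₀ := by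
      intro b hb
      induction hb with
      | refl => exact hi₁
      | tail hrt harc ih =>
        obtain ⟨g, hg, l, hl⟩ := harc
        exact hl ▸ hcl _ ih g hg l
    exact hj₀ (hstay j₀ (hirr i₁ j₀))
  obtain ⟨i', hi'I, g', hg'pos, l', hl'⟩ := hexit
  -- choose ε
  set sC : Finset (Fin n) := Finset.univ.filter (fun i => i ∉ Iset x₀) with hsCdef
  have hsCne : sC.Nonempty := ⟨j₀, by simp [hsCdef, hj₀]⟩
  have hsC : ∀ i, i ∈ sC ↔ i ∉ Iset x₀ := fun i => by simp [hsCdef]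
  set β : ℝ := sC.sup' hsCne (fun i => tApply T x₀ i / (μ * x₀ i ^ (k - 1))) with hβdef
  have hβlt : β < 1 := by
    rw [hβdef]
    rw [Finset.sup'_lt_iff]
    intro i hi
    have hden : 0 < μ * x₀ i ^ (k - 1) := mul_pos hμpos (pow_pos (hx₀pos i) _)
    rw [div_lt_one hden]
    exact lt_of_le_of_ne (F1 i) (fun h => ((hsC i).mp hi) ((hImem i).mpr h))
  have hβ0 : 0 ≤ β := by
    have hj : tApply T x₀ j₀ / (μ * x₀ j₀ ^ (k - 1)) ≤ β := by
      have := Finset.le_sup' (f := fun i => tApply T x₀ i / (μ * x₀ i ^ (k - 1)))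
        ((hsC j₀).mpr hj₀)
      rw [← hβdef] at this
      exact this
    have : 0 ≤ tApply T x₀ j₀ / (μ * x₀ j₀ ^ (k - 1)) :=
      div_nonneg (tApply_nonneg T hT x₀ (fun i => le_of_lt (hx₀pos i)) j₀)
        (le_of_lt (mul_pos hμpos (pow_pos (hx₀pos j₀) _)))
    linarith
  set ε : ℝ := (1 - β) / (2 * k) with hεdef
  have hkpos : (0:ℝ) < (k:ℝ) := by
    have : 0 < k := by omega
    exact_mod_cast this
  have hk2 : (2:ℝ) ≤ (k:ℝ) := by exact_mod_cast hk
  have h2k : (0:ℝ) < 2 * (k:ℝ) := by linarith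
  have hε0 : 0 < ε := by
    rw [hεdef]
    exact div_pos (by linarith) h2k
  have hε1 : ε < 1 := by
    rw [hεdef, div_lt_one h2k]
    linarith
  have hBern : β < (1 - ε) ^ (k - 1) := by
    have hcast : ((k - 1 : ℕ) : ℝ) ≤ (k : ℝ) := by
      have : k - 1 ≤ k := Nat.sub_le k 1
      exact_mod_cast this
    have hb1 := one_add_mul_le_pow (a := -ε) (by linarith) (k - 1)
    have h2 : 1 - ((k-1:ℕ):ℝ) * ε ≤ (1 - ε) ^ (k - 1) := by
      have : (1:ℝ) + (k-1:ℕ) * (-ε) = 1 - ((k-1:ℕ):ℝ) * ε := by ring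
      rw [← this]
      calc (1:ℝ) + (k-1:ℕ) * (-ε) ≤ (1 + (-ε)) ^ (k-1) := hb1
      _ = (1 - ε) ^ (k - 1) := by
          have he : (1:ℝ) + -ε = 1 - ε := by ring
          rw [he]
    have h3 : ((k-1:ℕ):ℝ) * ε ≤ (k:ℝ) * ε :=
      mul_le_mul_of_nonneg_right hcast (le_of_lt hε0)
    have h4 : (k:ℝ) * ε = (1 - β) / 2 := by
      rw [hεdef]
      field_simp
    linarith
  -- the perturbed vector
  set y : Fin n → ℝ := fun i => if i ∈ Iset x₀ then x₀ i else (1 - ε) * x₀ i with hydef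
  have hypos : ∀ i, 0 < y i := by
    intro i
    rw [hydef]
    dsimp only
    split
    · exact hx₀pos i
    · exact mul_pos (by linarith) (hx₀pos i)
  have hyle : ∀ i, y i ≤ x₀ i := by
    intro i
    rw [hydef]
    dsimp only
    split
    · exact le_refl _
    · nlinarith [hx₀pos i]
  have htA : ∀ i, tApply T y i ≤ tApply T x₀ i :=
    tApply_mono T hT (fun i => le_of_lt (hypos i)) hyle
  have hyI : ∀ i ∈ Iset x₀, y i = x₀ i := by
    intro i hi
    rw [hydef]
    dsimp only
    rw [if_pos hi]
  have hyN : ∀ i ∉ Iset x₀, y i = (1 - ε) * x₀ i := by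
    intro i hi
    rw [hydef]
    dsimp only
    rw [if_neg hi]
  -- strict bounds
  have G1 : ∀ i ∉ Iset x₀, tApply T y i < μ * y i ^ (k - 1) := by
    intro i hi
    have hβi : tApply T x₀ i ≤ β * (μ * x₀ i ^ (k - 1)) := by
      have h := Finset.le_sup' (fun i => tApply T x₀ i / (μ * x₀ i ^ (k - 1)))
        ((hsC i).mpr hi)
      rw [← hβdef] at h
      have hden : 0 < μ * x₀ i ^ (k - 1) := mul_pos hμpos (pow_pos (hx₀pos i) _)
      rw [div_le_iff₀ hden] at h
      linarith
    have hstrict : β * (μ * x₀ i ^ (k - 1)) < (1 - ε) ^ (k - 1) * (μ * x₀ i ^ (k - 1)) := by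
      have hden : 0 < μ * x₀ i ^ (k - 1) := mul_pos hμpos (pow_pos (hx₀pos i) _)
      nlinarith
    have : μ * y i ^ (k - 1) = (1 - ε) ^ (k - 1) * (μ * x₀ i ^ (k - 1)) := by
      rw [hyN i hi, mul_pow]
      ring
    rw [this]
    calc tApply T y i ≤ tApply T x₀ i := htA i
    _ ≤ β * (μ * x₀ i ^ (k - 1)) := hβi
    _ < _ := hstrict
  have G2 : tApply T y i' < μ * y i' ^ (k - 1) := by
    have heq : μ * y i' ^ (k - 1) = tApply T x₀ i' := by
      rw [hyI i' hi'I]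
      exact ((hImem i').mp hi'I).symm
    rw [heq]
    -- strict decrease via the exit term
    have hterm : ∀ g : Fin (k-1) → Fin n,
        T (tupleCons i' g) * ∏ j, y (g j) ≤ T (tupleCons i' g) * ∏ j, x₀ (g j) := by
      intro g
      refine mul_le_mul_of_nonneg_left ?_ (hT _)
      exact Finset.prod_le_prod (fun j _ => le_of_lt (hypos (g j))) (fun j _ => hyle (g j))
    have hterm' : T (tupleCons i' g') * ∏ j, y (g' j) < T (tupleCons i' g') * ∏ j, x₀ (g' j) := by
      refine (mul_lt_mul_iff_right₀ hg'pos).mpr ?_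
      refine Finset.prod_lt_prod (fun j _ => hypos (g' j)) (fun j _ => hyle (g' j)) ?_
      refine ⟨l', Finset.mem_univ l', ?_⟩
      rw [hyN _ hl']
      have h5 := hx₀pos (g' l')
      nlinarith
    unfold tApply
    exact Finset.sum_lt_sum (fun g _ => hterm g) ⟨g', Finset.mem_univ g', hterm'⟩
  have G3 : ∀ i ∈ Iset x₀, tApply T y i ≤ μ * y i ^ (k - 1) := by
    intro i hi
    rw [hyI i hi]
    calc tApply T y i ≤ tApply T x₀ i := htA i
    _ = μ * x₀ i ^ (k - 1) := (hImem i).mp hi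
  -- g(y) = μ and descent
  have hgy_le : gfun y ≤ μ := by
    rw [hgdef]
    refine Finset.sup'_le hne _ (fun i _ => ?_)
    have hyi : tApply T y i ≤ μ * y i ^ (k - 1) := by
      by_cases hi : i ∈ Iset x₀
      · exact G3 i hi
      · exact le_of_lt (G1 i hi)
    rw [hratiodef]
    rw [div_le_iff₀ (pow_pos (hypos i) _)]
    linarith
  have hgy : gfun y = μ := le_antisymm hgy_le (hglob y hypos)
  have hsubset : Iset y ⊆ (Iset x₀).erase i' := by
    intro i hi
    have himem := (hImemG y i).mp hi
    rw [Finset.mem_erase]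
    constructor
    · rintro rfl
      exact absurd himem (ne_of_lt G2)
    · by_contra hnot
      exact absurd himem (ne_of_lt (G1 i hnot))
  have hssub : Iset y ⊂ Iset x₀ :=
    Finset.ssubset_of_subset_of_ssubset hsubset (Finset.erase_ssubset hi'I)
  have hcardlt : (Iset y).card < (Iset x₀).card := Finset.card_lt_card hssub
  have hsinf : sInf A ≤ (Iset y).card := Nat.sInf_le ⟨y, hypos, hgy, rfl⟩
  omega

end Aux5
section Aux6
open Finset
variable {k n : ℕ}

lemma specRad_eq_of_eig (hk : 2 ≤ k) (hn : 1 ≤ n) (T : (Fin k → Fin n) → ℝ)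
    (hT : ∀ f, 0 ≤ T f) {x : Fin n → ℝ} {μ : ℝ} (hμ : 0 ≤ μ)
    (hx : ∀ i, 0 < x i) (heig : ∀ i, tApply T x i = μ * x i ^ (k - 1)) :
    specRad T = μ := by
  haveI : Nonempty (Fin n) := ⟨⟨0, hn⟩⟩
  set xc : Fin n → ℂ := fun i => ((x i : ℝ) : ℂ) with hxcdef
  have hxc0 : xc ≠ 0 := by
    intro h
    have := congrFun h ⟨0, hn⟩
    simp only [hxcdef, Pi.zero_apply, Complex.ofReal_eq_zero] at this
    exact absurd this (ne_of_gt (hx ⟨0, hn⟩))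
  have hEig : IsEig T ((μ : ℝ) : ℂ) := by
    refine ⟨xc, hxc0, fun i => ?_⟩
    rw [hxcdef]
    rw [tApply_cast T x i, heig i]
    push_cast
    ring
  have hub : ∀ (lam : ℂ), IsEig T lam → ‖lam‖ ≤ μ := by
    rintro lam ⟨w, hw0, hweq⟩
    set z : Fin n → ℝ := fun i => ‖w i‖ with hzdef
    have hz : ∀ i, 0 ≤ z i := fun i => norm_nonneg _
    have hz0 : z ≠ 0 := by
      intro h
      apply hw0
      funext i
      have := congrFun h i
      simp only [hzdef, Pi.zero_apply] at this
      simpa using this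
    have hsub : ∀ i, ‖lam‖ * z i ^ (k - 1) ≤ tApply T z i := by
      intro i
      have h1 : ‖lam‖ * z i ^ (k - 1)
          = ‖(tApply (fun f => ((T f : ℝ) : ℂ)) w i)‖ := by
        rw [hweq i, norm_mul, norm_pow]
      rw [h1]
      unfold tApply
      calc ‖(∑ g : Fin (k-1) → Fin n,
            ((T (tupleCons i g) : ℝ) : ℂ) * ∏ j, w (g j))‖
          ≤ ∑ g : Fin (k-1) → Fin n,
            ‖((T (tupleCons i g) : ℝ) : ℂ) * ∏ j, w (g j)‖ :=
          norm_sum_le _ _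
      _ = ∑ g : Fin (k-1) → Fin n, T (tupleCons i g) * ∏ j, z (g j) := by
          refine Finset.sum_congr rfl (fun g _ => ?_)
          rw [norm_mul, norm_prod]
          congr 1
          · rw [Complex.norm_real, Real.norm_of_nonneg (hT _)]
      _ ≤ ∑ g : Fin (k-1) → Fin n, T (tupleCons i g) * ∏ j, z (g j) := le_refl _
    exact subinvariant_le hk hn T hT hx heig hz hz0 hsub
  have hμS : μ ∈ {r : ℝ | ∃ lam : ℂ, IsEig T lam ∧ ‖lam‖ = r} := by
    refine ⟨((μ : ℝ) : ℂ), hEig, ?_⟩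
    rw [Complex.norm_real, Real.norm_of_nonneg hμ]
  have hbdd : ∀ r ∈ {r : ℝ | ∃ lam : ℂ, IsEig T lam ∧ ‖lam‖ = r}, r ≤ μ := by
    rintro r ⟨lam, hlam, rfl⟩
    exact hub lam hlam
  unfold specRad
  exact le_antisymm (csSup_le ⟨μ, hμS⟩ hbdd) (le_csSup ⟨μ, hbdd⟩ hμS)
end Aux6
section Aux7
open Finset
variable {k n : ℕ}

set_option maxHeartbeats 1000000 in
lemma eigvec_unique (hk : 2 ≤ k) (hn : 1 ≤ n) (T : (Fin k → Fin n) → ℝ)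
    (hT : ∀ f, 0 ≤ T f) (hirr : WeaklyIrreducible T) {lam : ℝ}
    {x y : Fin n → ℝ} (hx : ∀ i, 0 < x i) (hy : ∀ i, 0 < y i)
    (hex : ∀ i, tApply T x i = lam * x i ^ (k - 1))
    (hey : ∀ i, tApply T y i = lam * y i ^ (k - 1)) :
    ∃ c : ℝ, 0 < c ∧ y = c • x := by
  classical
  haveI : Nonempty (Fin n) := ⟨⟨0, hn⟩⟩
  have hne : (Finset.univ : Finset (Fin n)).Nonempty := Finset.univ_nonempty
  obtain ⟨a, -, ha⟩ := Finset.exists_mem_eq_inf' hne (fun i => y i / x i)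
  set t : ℝ := Finset.univ.inf' hne (fun i => y i / x i) with htdef
  have hta : t = y a / x a := ha
  have htpos : 0 < t := by
    rw [hta]
    exact div_pos (hy a) (hx a)
  have htle : ∀ i, t * x i ≤ y i := by
    intro i
    have h := Finset.inf'_le (fun i => y i / x i) (Finset.mem_univ i)
    rw [← htdef] at h
    exact (le_div_iff₀ (hx i)).mp h
  have hya : y a = t * x a := by
    rw [hta, div_mul_cancel₀ _ (ne_of_gt (hx a))]
  have hprop : ∀ b, Relation.ReflTransGen (arcRel T) a b → y b = t * x b := by
    intro b hb
    induction hb with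
    | refl => exact hya
    | @tail m b' hrt harc ih =>
      obtain ⟨g₁, hg₁, l₁, hl₁⟩ := harc
      have he1 : tApply T y m = tApply T (t • x) m := by
        rw [hey m, tApply_smul, hex m, ih, mul_pow]
        ring
      have htxpos : ∀ i, 0 < (t • x) i := fun i => by
        simp only [Pi.smul_apply, smul_eq_mul]
        exact mul_pos htpos (hx i)
      have htxle : ∀ i, (t • x) i ≤ y i := fun i => by
        simp only [Pi.smul_apply, smul_eq_mul]
        exact htle i
      have hterms : ∀ g : Fin (k-1) → Fin n,
          T (tupleCons m g) * ∏ j, (t • x) (g j) ≤ T (tupleCons m g) * ∏ j, y (g j) := by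
        intro g
        refine mul_le_mul_of_nonneg_left ?_ (hT _)
        exact Finset.prod_le_prod (fun j _ => le_of_lt (htxpos (g j)))
          (fun j _ => htxle (g j))
      unfold tApply at he1
      have hsum0 : ∑ g : Fin (k-1) → Fin n,
          (T (tupleCons m g) * ∏ j, y (g j) - T (tupleCons m g) * ∏ j, (t • x) (g j)) = 0 := by
        rw [Finset.sum_sub_distrib, he1, sub_self]
      have hzero := (Finset.sum_eq_zero_iff_of_nonneg
        (fun g _ => sub_nonneg.mpr (hterms g))).mp hsum0 g₁ (Finset.mem_univ g₁)
      have hprod_eq : ∏ j, y (g₁ j) = ∏ j, (t • x) (g₁ j) :=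
        mul_left_cancel₀ (ne_of_gt hg₁) (sub_eq_zero.mp hzero)
      by_contra hne'
      have hlt : (t • x) b' < y b' := by
        refine lt_of_le_of_ne (htxle b') ?_
        intro h
        apply hne'
        rw [← h]
        simp
      have : ∏ j, (t • x) (g₁ j) < ∏ j, y (g₁ j) := by
        refine Finset.prod_lt_prod (fun j _ => htxpos (g₁ j)) (fun j _ => htxle (g₁ j)) ?_
        exact ⟨l₁, Finset.mem_univ l₁, by rw [hl₁]; exact hlt⟩
      rw [hprod_eq] at this
      exact lt_irrefl _ this
  refine ⟨t, htpos, funext (fun i => ?_)⟩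
  rw [hprop i (hirr a i)]
  simp
end Aux7
/-- (Friedland–Gaubert–Han) If `T` is a weakly irreducible
nonnegative tensor, then `ρ(T)` is the unique eigenvalue possessing a strictly
positive eigenvector, and that eigenvector is unique up to positive scaling. -/
theorem specRad_unique_Hplusplus {k n : ℕ} (hk : 2 ≤ k) (hn : 1 ≤ n)
    (T : (Fin k → Fin n) → ℝ) (hT : ∀ f, 0 ≤ T f) (hirr : WeaklyIrreducible T) :
    (∃ x : Fin n → ℝ, (∀ i, 0 < x i) ∧
        ∀ i, tApply T x i = specRad T * x i ^ (k - 1)) ∧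
    (∀ (lam : ℝ) (x : Fin n → ℝ), (∀ i, 0 < x i) →
        (∀ i, tApply T x i = lam * x i ^ (k - 1)) → lam = specRad T) ∧
    (∀ x y : Fin n → ℝ, (∀ i, 0 < x i) → (∀ i, 0 < y i) →
        (∀ i, tApply T x i = specRad T * x i ^ (k - 1)) →
        (∀ i, tApply T y i = specRad T * y i ^ (k - 1)) →
        ∃ c : ℝ, 0 < c ∧ y = c • x) := by
  classical
  by_cases hrow : ∀ i, ∃ g, 0 < T (tupleCons i g)
  · obtain ⟨x₀, μ, hμ0, hx₀, heig⟩ := main_exists hk hn T hT hirr hrow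
    have hspec : specRad T = μ := specRad_eq_of_eig hk hn T hT hμ0 hx₀ heig
    refine ⟨⟨x₀, hx₀, fun i => by rw [hspec]; exact heig i⟩, ?_, ?_⟩
    · intro lam x hx hex
      rw [hspec]
      have hxne : x ≠ 0 := by
        intro h
        have := congrFun h ⟨0, hn⟩
        simp only [Pi.zero_apply] at this
        exact absurd this (ne_of_gt (hx ⟨0, hn⟩))
      have h1 : lam ≤ μ := subinvariant_le hk hn T hT hx₀ heig
        (fun i => le_of_lt (hx i)) hxne (fun i => le_of_eq (hex i).symm)
      have h2 : μ ≤ lam := le_superinvariant hk hn T hT hx₀ heig hx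
        (fun i => le_of_eq (hex i))
      linarith
    · intro x y hx hy hex hey
      exact eigvec_unique hk hn T hT hirr hx hy hex hey
  · -- degenerate case: some row of `T` vanishes; then `n = 1` and `T = 0`.
    push_neg at hrow
    obtain ⟨i₀, hi₀⟩ := hrow
    have hn1 : n = 1 := by
      by_contra h
      have h2 : 2 ≤ n := by omega
      have hjex : ∃ j : Fin n, j ≠ i₀ := by
        by_cases h0 : (i₀ : ℕ) = 0
        · exact ⟨⟨1, by omega⟩, by intro hh; rw [← hh] at h0; simp at h0⟩
        · exact ⟨⟨0, by omega⟩, by intro hh; rw [← hh] at h0; simp at h0⟩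
      obtain ⟨j, hj⟩ := hjex
      rcases (Relation.ReflTransGen.cases_head (hirr i₀ j)) with heq | ⟨c, harc, -⟩
      · exact hj heq.symm
      · obtain ⟨g, hg, -⟩ := harc
        exact absurd hg (not_lt.mpr (hi₀ g))
    subst hn1
    have hT0 : ∀ f, T f = 0 := by
      intro f
      have hfe : f = tupleCons i₀ (fun _ => i₀) := funext fun j => Subsingleton.elim _ _
      have h1 := hi₀ (fun _ => i₀)
      have h2 := hT f
      rw [hfe] at h2 ⊢
      linarith
    have htap : ∀ (x : Fin 1 → ℝ) (i : Fin 1), tApply T x i = 0 := by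
      intro x i
      unfold tApply
      refine Finset.sum_eq_zero (fun g _ => ?_)
      rw [hT0]
      ring
    have htapC : ∀ (w : Fin 1 → ℂ) (i : Fin 1),
        tApply (fun f => ((T f : ℝ) : ℂ)) w i = 0 := by
      intro w i
      unfold tApply
      refine Finset.sum_eq_zero (fun g _ => ?_)
      simp only []
      rw [hT0]
      simp
    have hspec : specRad T = 0 := by
      unfold specRad
      have hset : {r : ℝ | ∃ lam : ℂ, IsEig T lam ∧ ‖lam‖ = r} = {0} := by
        ext r
        simp only [Set.mem_setOf_eq, Set.mem_singleton_iff]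
        constructor
        · rintro ⟨lam, ⟨w, hw0, hweq⟩, rfl⟩
          obtain ⟨i, hwi⟩ := Function.ne_iff.mp hw0
          have heq := hweq i
          rw [htapC] at heq
          have hlam : lam = 0 := by
            rcases mul_eq_zero.mp heq.symm with h | h
            · exact h
            · exact absurd h (pow_ne_zero _ (by simpa using hwi))
          simp [hlam]
        · rintro rfl
          refine ⟨0, ⟨fun _ => 1, ?_, fun i => ?_⟩, by simp⟩
          · intro h
            have := congrFun h 0
            simp at this
          · rw [htapC, zero_mul]
      rw [hset]
      exact csSup_singleton 0
    refine ⟨⟨fun _ => 1, fun i => one_pos, fun i => by rw [htap, hspec]; ring⟩, ?_, ?_⟩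
    · intro lam x hx hex
      have heq := hex 0
      rw [htap] at heq
      rw [hspec]
      rcases mul_eq_zero.mp heq.symm with h | h
      · exact h
      · exact absurd h (pow_ne_zero _ (ne_of_gt (hx 0)))
    · intro x y hx hy hex hey
      refine ⟨y 0 / x 0, div_pos (hy 0) (hx 0), funext fun i => ?_⟩
      have hi : i = 0 := Subsingleton.elim i 0
      subst hi
      simp only [Pi.smul_apply, smul_eq_mul]
      rw [div_mul_cancel₀ _ (ne_of_gt (hx 0))]
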